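/- (Theorem 2) Let T > 0 and let t ↦ ρ_t, t ∈ [0,T], be a continuously differentiable family of density matrices on ℂ^d with derivative ρ̇_t. Then | ‖Im ρ_T‖₁ − ‖Im ρ_0‖₁ | ≤ ∫₀ᵀ ‖Im ρ̇_t‖₁ dt, where Im ρ̇_t = (ρ̇_t − ρ̇_tᵀ)/(2i). In particular, T ≥ |M_tr(ρ_T) − M_tr(ρ_0)| / Λ_tr(T), where M_tr(ρ) := ‖Im ρ‖₁ and Λ_tr(T) := (1/T) ∫₀ᵀ ‖Im ρ̇_t‖₁ dt. -/

import Mathlib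

open Matrix
open scoped ComplexOrder

noncomputable section

/-- A density matrix: Hermitian, positive semidefinite, trace one. -/
def IsDensityMatrix {d : ℕ} (ρ : Matrix (Fin d) (Fin d) ℂ) : Prop :=
  ρ.IsHermitian ∧ ρ.PosSemidef ∧ ρ.trace = 1

/-- The real part `(ρ + ρᵀ)/2` of a matrix. -/
def reM {d : ℕ} (ρ : Matrix (Fin d) (Fin d) ℂ) : Matrix (Fin d) (Fin d) ℂ :=
  (2⁻¹ : ℂ) • (ρ + ρᵀ)

/-- The imaginary part `(ρ - ρᵀ)/(2i)` of a matrix. -/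
def imM {d : ℕ} (ρ : Matrix (Fin d) (Fin d) ℂ) : Matrix (Fin d) (Fin d) ℂ :=
  (2 * Complex.I)⁻¹ • (ρ - ρᵀ)

/-- The Hilbert–Schmidt norm `√(tr (Aᴴ A))`. -/
def hsNorm {d : ℕ} (A : Matrix (Fin d) (Fin d) ℂ) : ℝ :=
  Real.sqrt ((Aᴴ * A).trace.re)

/-- The square root of a positive semidefinite matrix, as `Matrix.PosSemidef.sqrt` was defined
in the older Mathlib (removed since). -/
def psdSqrt {d : ℕ} {A : Matrix (Fin d) (Fin d) ℂ} (hA : A.PosSemidef) : Matrix (Fin d) (Fin d) ℂ :=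
  hA.isHermitian.eigenvectorUnitary.1 * diagonal ((↑) ∘ (√·) ∘ hA.isHermitian.eigenvalues) *
  (star hA.isHermitian.eigenvectorUnitary : Matrix (Fin d) (Fin d) ℂ)

/-- The trace norm `tr √(Aᴴ A)`. -/
def traceNorm {d : ℕ} (A : Matrix (Fin d) (Fin d) ℂ) : ℝ :=
  ((psdSqrt (Matrix.posSemidef_conjTranspose_mul_self A)).trace).re

/-- Matrix logarithm via the continuous functional calculus (on Hermitian matrices). -/
def matLog {d : ℕ} (A : Matrix (Fin d) (Fin d) ℂ) : Matrix (Fin d) (Fin d) ℂ :=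
  cfc Real.log A

open scoped Classical in
/-- The positive semidefinite square root of a positive semidefinite matrix
(junk value `0` otherwise). -/
def msqrt {d : ℕ} (A : Matrix (Fin d) (Fin d) ℂ) : Matrix (Fin d) (Fin d) ℂ :=
  if h : A.PosSemidef then psdSqrt h else 0

/-- The von Neumann entropy `S(ρ) = -tr(ρ log ρ)`. -/
def vnEntropy {d : ℕ} (ρ : Matrix (Fin d) (Fin d) ℂ) : ℝ :=
  -((ρ * matLog ρ).trace.re)

/-- The relative entropy of imaginarity `M_r(ρ) = S(Re ρ) - S(ρ)`. -/
def Mr {d : ℕ} (ρ : Matrix (Fin d) (Fin d) ℂ) : ℝ :=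
  vnEntropy (reM ρ) - vnEntropy ρ

/-- The root fidelity `tr √(√ρ σ √ρ)`. -/
def rootFid {d : ℕ} (ρ σ : Matrix (Fin d) (Fin d) ℂ) : ℝ :=
  ((msqrt (msqrt ρ * σ * msqrt ρ)).trace).re

/-- The geometric imaginarity `M_g(ρ) = (1 - √F(ρ, ρᵀ))/2`. -/
def Mg {d : ℕ} (ρ : Matrix (Fin d) (Fin d) ℂ) : ℝ :=
  (1 - rootFid ρ ρᵀ) / 2

/-- The Hilbert–Schmidt inner product `⟨A, B⟩ = tr(Aᴴ B)`. -/
def hsInner {d : ℕ} (A B : Matrix (Fin d) (Fin d) ℂ) : ℂ :=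
  (Aᴴ * B).trace

/-- The operator norm of a map on matrices induced by the Hilbert–Schmidt norm. -/
def opNormHS {d : ℕ} (L : Matrix (Fin d) (Fin d) ℂ → Matrix (Fin d) (Fin d) ℂ) : ℝ :=
  sSup {x : ℝ | ∃ ψ, hsNorm ψ = 1 ∧ x = hsNorm (L ψ)}

/-- The Liouville-space normalized vector `ρ̃ = ρ / ‖ρ‖_HS`. -/
def hsNormalize {d : ℕ} (A : Matrix (Fin d) (Fin d) ℂ) : Matrix (Fin d) (Fin d) ℂ :=
  ((hsNorm A : ℂ))⁻¹ • A

/-- The fluctuation `Δ𝓛 = √(‖𝓛ψ‖² - |⟨ψ, 𝓛ψ⟩|²)` of a superoperator at a unit vector. -/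
def fluct {d : ℕ} (L : Matrix (Fin d) (Fin d) ℂ → Matrix (Fin d) (Fin d) ℂ)
    (ψ : Matrix (Fin d) (Fin d) ℂ) : ℝ :=
  Real.sqrt ((hsNorm (L ψ)) ^ 2 - (‖hsInner ψ (L ψ)‖) ^ 2)

lemma traceNorm_eq_sum_abs {d : ℕ} {H A : Matrix (Fin d) (Fin d) ℂ}
    (hH : H.IsHermitian) (hA : Aᴴ * A = H * H) :
    traceNorm A = ∑ i, |hH.eigenvalues i| := by
  set U : Matrix (Fin d) (Fin d) ℂ := (hH.eigenvectorUnitary : Matrix (Fin d) (Fin d) ℂ) with hU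
  have hUU : U * star U = 1 := Matrix.mem_unitaryGroup_iff.mp hH.eigenvectorUnitary.2
  have hUU' : star U * U = 1 := Matrix.mem_unitaryGroup_iff'.mp hH.eigenvectorUnitary.2
  have key : ∀ M N : Matrix (Fin d) (Fin d) ℂ,
      (U*M*star U) * (U*N*star U) = U*(M*N)*star U := by
    intro M N
    calc (U*M*star U) * (U*N*star U) = U*(M*((star U*U)*(N*star U))) := by
          simp only [Matrix.mul_assoc]
      _ = U*(M*N)*star U := by rw [hUU', one_mul]; simp only [Matrix.mul_assoc]
  set D : Matrix (Fin d) (Fin d) ℂ := Matrix.diagonal (fun i => (Complex.ofReal |hH.eigenvalues i|)) with hD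
  set B : Matrix (Fin d) (Fin d) ℂ := U * D * star U with hB
  have hDpsd : D.PosSemidef := by
    refine Matrix.PosSemidef.diagonal ?_
    intro i
    simpa using Complex.zero_le_real.2 (abs_nonneg _)
  have hBpsd : B.PosSemidef := by
    simpa [hB, Matrix.mul_assoc, Matrix.star_eq_conjTranspose] using hDpsd.mul_mul_conjTranspose_same U
  have hBsq : B ^ 2 = Aᴴ * A := by
    rw [hA, pow_two, hB, key]
    conv_rhs => rw [hH.spectral_theorem, Unitary.conjStarAlgAut_apply, ← hU]
    rw [key]
    congr 2
    rw [hD, Matrix.diagonal_mul_diagonal, Matrix.diagonal_mul_diagonal]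
    refine congrArg Matrix.diagonal (funext fun i => ?_)
    simp only [Pi.mul_apply, Function.comp_apply]
    rw [show (RCLike.ofReal (hH.eigenvalues i) : ℂ) = Complex.ofReal (hH.eigenvalues i) from rfl,
      ← Complex.ofReal_mul, ← Complex.ofReal_mul, abs_mul_abs_self]
  have hsqrt : B = psdSqrt (Matrix.posSemidef_conjTranspose_mul_self A) := by
    have e1 : psdSqrt (Matrix.posSemidef_conjTranspose_mul_self A) = cfc Real.sqrt (Aᴴ * A) := by
      rw [(Matrix.posSemidef_conjTranspose_mul_self A).isHermitian.cfc_eq]; rfl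
    have e2 : H * H = cfc (fun x : ℝ => x * x) H := by
      rw [cfc_mul (fun x : ℝ => x) (fun x : ℝ => x) H,
        cfc_id' ℝ H (ha := hH.isSelfAdjoint)]
    rw [e1, hA, e2, ← cfc_comp' Real.sqrt (fun x : ℝ => x * x) H (ha := hH.isSelfAdjoint),
      hH.cfc_eq]
    simp only [Real.sqrt_mul_self_eq_abs, IsHermitian.cfc, Unitary.conjStarAlgAut_apply,
      Unitary.coe_star]
    rfl
  unfold traceNorm
  rw [← hsqrt, hB, Matrix.trace_mul_cycle, hUU', one_mul, Matrix.trace_diagonal]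
  simp

lemma sum_abs_diag_le {d : ℕ} {H : Matrix (Fin d) (Fin d) ℂ} (hH : H.IsHermitian)
    {W : Matrix (Fin d) (Fin d) ℂ} (hW : W ∈ Matrix.unitaryGroup (Fin d) ℂ) :
    ∑ i, ‖(star W * H * W) i i‖ ≤ ∑ i, |hH.eigenvalues i| := by
  set U : Matrix (Fin d) (Fin d) ℂ := (hH.eigenvectorUnitary : Matrix (Fin d) (Fin d) ℂ) with hU
  set M : Matrix (Fin d) (Fin d) ℂ := star W * U with hM
  have hMM : star M * M = 1 := by
    have h1 : W * star W = 1 := Matrix.mem_unitaryGroup_iff.mp hW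
    have h2 : star U * U = 1 := Matrix.mem_unitaryGroup_iff'.mp hH.eigenvectorUnitary.2
    calc star M * M = star U * (W * star W) * U := by
          rw [hM, StarMul.star_mul, star_star]
          simp only [Matrix.mul_assoc]
      _ = 1 := by rw [h1, Matrix.mul_one, h2]
  have hcol : ∀ j, ∑ i, Complex.normSq (M i j) = 1 := by
    intro j
    have h0 : (star M * M) j j = (1 : Matrix (Fin d) (Fin d) ℂ) j j := by rw [hMM]
    rw [Matrix.mul_apply] at h0
    simp only [Matrix.star_apply, Matrix.one_apply_eq] at h0
    have h1 : ∀ k, star (M k j) * M k j = (Complex.normSq (M k j) : ℂ) := by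
      intro k
      rw [Complex.star_def, mul_comm, Complex.mul_conj]
    rw [Finset.sum_congr rfl (fun k _ => h1 k), ← Complex.ofReal_sum] at h0
    exact_mod_cast h0
  have hentry : ∀ i, (star W * H * W) i i
      = ∑ j, (hH.eigenvalues j : ℂ) * (M i j * star (M i j)) := by
    intro i
    have hsM : star M = star U * W := by rw [hM, StarMul.star_mul, star_star]
    have h2 : star W * H * W = M * Matrix.diagonal (RCLike.ofReal ∘ hH.eigenvalues) * star M := by
      conv_lhs => rw [hH.spectral_theorem, Unitary.conjStarAlgAut_apply, ← hU]
      rw [hsM, hM]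
      simp only [Matrix.mul_assoc]
    rw [h2, Matrix.mul_apply]
    refine Finset.sum_congr rfl fun j _ => ?_
    rw [Matrix.mul_diagonal, Matrix.star_apply]
    show M i j * Complex.ofReal (hH.eigenvalues j) * star (M i j) = _
    ring
  calc ∑ i, ‖(star W * H * W) i i‖
      ≤ ∑ i, ∑ j, |hH.eigenvalues j| * Complex.normSq (M i j) := by
        refine Finset.sum_le_sum fun i _ => ?_
        rw [hentry i]
        refine le_trans (norm_sum_le _ _) (le_of_eq ?_)
        refine Finset.sum_congr rfl fun j _ => ?_
        rw [norm_mul, Complex.star_def, Complex.mul_conj, Complex.norm_real,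
          Complex.norm_real, Real.norm_eq_abs, Real.norm_eq_abs, abs_of_nonneg (Complex.normSq_nonneg _)]
    _ = ∑ i, |hH.eigenvalues i| := by
        rw [Finset.sum_comm]
        refine Finset.sum_congr rfl fun j _ => ?_
        rw [← Finset.mul_sum, hcol j, mul_one]

lemma unitary_conj_mul {d : ℕ} {U : Matrix (Fin d) (Fin d) ℂ} (hU : star U * U = 1)
    (M N : Matrix (Fin d) (Fin d) ℂ) :
    (U * M * star U) * (U * N * star U) = U * (M * N) * star U := by
  calc (U*M*star U) * (U*N*star U) = U*(M*((star U*U)*(N*star U))) := by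
        simp only [Matrix.mul_assoc]
    _ = U*(M*N)*star U := by rw [hU, one_mul]; simp only [Matrix.mul_assoc]

def tnH {d : ℕ} (H : Matrix (Fin d) (Fin d) ℂ) : ℝ := traceNorm (Complex.I • H)

lemma tnH_eq {d : ℕ} {H : Matrix (Fin d) (Fin d) ℂ} (hH : H.IsHermitian) :
    tnH H = ∑ i, |hH.eigenvalues i| := by
  refine traceNorm_eq_sum_abs hH ?_
  rw [Matrix.conjTranspose_smul, hH.eq, Matrix.smul_mul, Matrix.mul_smul, smul_smul]
  simp [Complex.ext_iff]

lemma tnH_nonneg {d : ℕ} {H : Matrix (Fin d) (Fin d) ℂ} (hH : H.IsHermitian) :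
    0 ≤ tnH H := by
  rw [tnH_eq hH]; positivity

lemma sum_abs_diag_eigen {d : ℕ} {H : Matrix (Fin d) (Fin d) ℂ} (hH : H.IsHermitian) :
    ∑ i, ‖(star (hH.eigenvectorUnitary : Matrix (Fin d) (Fin d) ℂ) * H *
      (hH.eigenvectorUnitary : Matrix (Fin d) (Fin d) ℂ)) i i‖ = tnH H := by
  rw [show star (hH.eigenvectorUnitary : Matrix (Fin d) (Fin d) ℂ) * H *
      (hH.eigenvectorUnitary : Matrix (Fin d) (Fin d) ℂ) = diagonal (RCLike.ofReal ∘ hH.eigenvalues) from by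
    rw [← hH.conjStarAlgAut_star_eigenvectorUnitary, Unitary.conjStarAlgAut_star_apply], tnH_eq hH]
  refine Finset.sum_congr rfl fun i _ => ?_
  rw [Matrix.diagonal_apply_eq]
  show ‖Complex.ofReal (hH.eigenvalues i)‖ = _
  rw [Complex.norm_real, Real.norm_eq_abs]

lemma tnH_triangle {d : ℕ} {H K : Matrix (Fin d) (Fin d) ℂ}
    (hH : H.IsHermitian) (hK : K.IsHermitian) :
    tnH (H + K) ≤ tnH H + tnH K := by
  have hHK : (H + K).IsHermitian := hH.add hK
  rw [← sum_abs_diag_eigen hHK]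
  set W : Matrix (Fin d) (Fin d) ℂ := (hHK.eigenvectorUnitary : Matrix (Fin d) (Fin d) ℂ)
  have hW : W ∈ Matrix.unitaryGroup (Fin d) ℂ := hHK.eigenvectorUnitary.2
  have hsplit : ∀ i, (star W * (H + K) * W) i i = (star W * H * W) i i + (star W * K * W) i i := by
    intro i
    rw [Matrix.mul_add, Matrix.add_mul]
    rfl
  calc ∑ i, ‖(star W * (H + K) * W) i i‖
      ≤ ∑ i, (‖(star W * H * W) i i‖ + ‖(star W * K * W) i i‖) := by
        refine Finset.sum_le_sum fun i _ => ?_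
        rw [hsplit i]; exact norm_add_le _ _
    _ ≤ tnH H + tnH K := by
        rw [Finset.sum_add_distrib]
        exact add_le_add ((sum_abs_diag_le hH hW).trans_eq (tnH_eq hH).symm)
          ((sum_abs_diag_le hK hW).trans_eq (tnH_eq hK).symm)

lemma tnH_le_entries {d : ℕ} {H : Matrix (Fin d) (Fin d) ℂ} (hH : H.IsHermitian) :
    tnH H ≤ (d : ℝ) * ∑ a, ∑ b, ‖H a b‖ := by
  rw [tnH_eq hH]
  set S : ℝ := ∑ a, ∑ b, ‖H a b‖ with hS
  have hS0 : 0 ≤ S := Finset.sum_nonneg fun a _ => Finset.sum_nonneg fun b _ =>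
    norm_nonneg _
  have htr : ∑ i, (hH.eigenvalues i) ^ 2 = ∑ a, ∑ b, Complex.normSq (H a b) := by
    have h1 : (H * H).trace = ∑ a, ∑ b, (Complex.normSq (H a b) : ℂ) := by
      rw [Matrix.trace]
      refine Finset.sum_congr rfl fun a _ => ?_
      rw [Matrix.diag_apply, Matrix.mul_apply]
      refine Finset.sum_congr rfl fun b _ => ?_
      rw [← hH.apply b a, Complex.star_def, Complex.mul_conj]
    have hUU' : star (hH.eigenvectorUnitary : Matrix (Fin d) (Fin d) ℂ) *
        (hH.eigenvectorUnitary : Matrix (Fin d) (Fin d) ℂ) = 1 :=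
      Matrix.mem_unitaryGroup_iff'.mp hH.eigenvectorUnitary.2
    have h2 : (H * H).trace = ∑ i, ((hH.eigenvalues i : ℂ)) ^ 2 := by
      conv_lhs => rw [hH.spectral_theorem, Unitary.conjStarAlgAut_apply]
      rw [unitary_conj_mul hUU', Matrix.trace_mul_cycle, hUU', one_mul,
        Matrix.diagonal_mul_diagonal, Matrix.trace_diagonal]
      refine Finset.sum_congr rfl fun i _ => ?_
      show ((RCLike.ofReal ∘ hH.eigenvalues) i) * ((RCLike.ofReal ∘ hH.eigenvalues) i) = _
      simp [pow_two]
    have h3 : ((∑ i, (hH.eigenvalues i)^2 : ℝ) : ℂ)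
        = ((∑ a, ∑ b, Complex.normSq (H a b) : ℝ) : ℂ) := by
      push_cast
      rw [← h2, h1]
    exact_mod_cast h3
  have hlam : ∀ i, |hH.eigenvalues i| ≤ S := by
    intro i
    have h1 : (hH.eigenvalues i) ^ 2 ≤ ∑ j, (hH.eigenvalues j) ^ 2 :=
      Finset.single_le_sum (f := fun j => hH.eigenvalues j ^ 2)
        (fun j _ => sq_nonneg _) (Finset.mem_univ i)
    have h2 : ∑ a, ∑ b, Complex.normSq (H a b) ≤ S ^ 2 := by
      have hinner : ∀ a : Fin d, ∑ b, Complex.normSq (H a b)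
          ≤ (∑ b, ‖H a b‖) ^ 2 := by
        intro a
        refine le_trans (le_of_eq ?_) (Finset.sum_sq_le_sq_sum_of_nonneg
          (fun b _ => norm_nonneg _))
        exact Finset.sum_congr rfl fun b _ => (Complex.sq_norm _).symm
      calc ∑ a, ∑ b, Complex.normSq (H a b) ≤ ∑ a, (∑ b, ‖H a b‖) ^ 2 :=
            Finset.sum_le_sum fun a _ => hinner a
        _ ≤ S ^ 2 := Finset.sum_sq_le_sq_sum_of_nonneg fun a _ =>
            Finset.sum_nonneg fun b _ => norm_nonneg _
    have : (hH.eigenvalues i) ^ 2 ≤ S ^ 2 := h1.trans (htr ▸ h2)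
    calc |hH.eigenvalues i| = Real.sqrt ((hH.eigenvalues i) ^ 2) := (Real.sqrt_sq_eq_abs _).symm
      _ ≤ Real.sqrt (S ^ 2) := Real.sqrt_le_sqrt this
      _ = S := Real.sqrt_sq hS0
  calc ∑ i, |hH.eigenvalues i| ≤ ∑ _i : Fin d, S := Finset.sum_le_sum fun i _ => hlam i
    _ = (d : ℝ) * S := by rw [Finset.sum_const, Finset.card_univ, Fintype.card_fin, nsmul_eq_mul]

-- bridging lemmas
lemma tn_imM_eq_tnH {d : ℕ} (X : Matrix (Fin d) (Fin d) ℂ) :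
    traceNorm (imM X) = tnH ((-Complex.I) • imM X) := by
  unfold tnH
  rw [smul_smul]
  norm_num

lemma Q_entry {d : ℕ} (X : Matrix (Fin d) (Fin d) ℂ) (a b : Fin d) :
    ((-Complex.I) • imM X) a b
      = ((-Complex.I) * (2 * Complex.I)⁻¹) * (X a b - X b a) := by
  simp [imM, Matrix.smul_apply, Matrix.sub_apply, Matrix.transpose_apply, smul_eq_mul]
  ring

lemma hermQ {d : ℕ} {X : Matrix (Fin d) (Fin d) ℂ} (hX : X.IsHermitian) :
    ((-Complex.I) • imM X).IsHermitian := by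
  refine Matrix.IsHermitian.ext fun i j => ?_
  rw [Q_entry, Q_entry]
  have h1 : star (X j i) = X i j := hX.apply i j
  have h2 : star (X i j) = X j i := hX.apply j i
  rw [star_mul']
  rw [show star (X j i - X i j) = X i j - X j i by rw [star_sub, h1, h2]]
  rw [show star ((-Complex.I) * (2 * Complex.I)⁻¹) = (-Complex.I) * (2 * Complex.I)⁻¹ by
    simp [Complex.ext_iff]]
lemma tnH_neg {d : ℕ} {H : Matrix (Fin d) (Fin d) ℂ} (hH : H.IsHermitian) :
    tnH (-H) = tnH H := by
  rw [tnH_eq hH]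
  refine traceNorm_eq_sum_abs hH ?_
  rw [smul_neg, Matrix.conjTranspose_neg, Matrix.conjTranspose_smul, hH.eq]
  rw [Matrix.neg_mul, Matrix.mul_neg, neg_neg, Matrix.smul_mul, Matrix.mul_smul, smul_smul]
  simp [Complex.ext_iff]

lemma tnH_abs_sub {d : ℕ} {A B : Matrix (Fin d) (Fin d) ℂ}
    (hA : A.IsHermitian) (hB : B.IsHermitian) :
    |tnH A - tnH B| ≤ tnH (A - B) := by
  rw [abs_sub_le_iff]
  constructor
  · have h1 : tnH A ≤ tnH (A - B) + tnH B := by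
      have := tnH_triangle (hA.sub hB) hB
      simpa using this
    linarith
  · have h1 : tnH B ≤ tnH (B - A) + tnH A := by
      have := tnH_triangle (hB.sub hA) hA
      simpa using this
    have h2 : tnH (B - A) = tnH (A - B) := by
      rw [show B - A = -(A - B) by abel, tnH_neg (hA.sub hB)]
    linarith

lemma diag_conj {d : ℕ} (W N : Matrix (Fin d) (Fin d) ℂ) (i : Fin d) :
    (star W * N * W) i i = ∑ b, ∑ a, star (W a i) * N a b * W b i := by
  rw [Matrix.mul_apply]
  refine Finset.sum_congr rfl fun b _ => ?_
  rw [Matrix.mul_apply, Finset.sum_mul]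
  refine Finset.sum_congr rfl fun a _ => ?_
  rw [Matrix.star_apply]

lemma g_contOn {d : ℕ} {T : ℝ} (hT : 0 < T) (ρ' : ℝ → Matrix (Fin d) (Fin d) ℂ)
    (hH' : ∀ t ∈ Set.Icc (0:ℝ) T, (ρ' t).IsHermitian)
    (hcont : ∀ i j, ContinuousOn (fun t => ρ' t i j) (Set.Icc (0:ℝ) T)) :
    ContinuousOn (fun t => traceNorm (imM (ρ' t))) (Set.Icc (0:ℝ) T) := by
  intro s hs
  set g : ℝ → ℝ := fun t => traceNorm (imM (ρ' t)) with hg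
  set b : ℝ → ℝ := fun t => (d : ℝ) *
    ∑ a, ∑ c, ‖((-Complex.I) • imM (ρ' t) - (-Complex.I) • imM (ρ' s)) a c‖ with hb
  have hbound : ∀ t ∈ Set.Icc (0:ℝ) T, |g t - g s| ≤ b t := by
    intro t ht
    have h1 : |g t - g s| ≤ tnH ((-Complex.I) • imM (ρ' t) - (-Complex.I) • imM (ρ' s)) := by
      rw [hg]
      simp only [tn_imM_eq_tnH]
      exact tnH_abs_sub (hermQ (hH' t ht)) (hermQ (hH' s hs))
    exact h1.trans (tnH_le_entries ((hermQ (hH' t ht)).sub (hermQ (hH' s hs))))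
  have hbcontOn : ContinuousOn b (Set.Icc (0:ℝ) T) := by
    refine continuousOn_const.mul ?_
    refine continuousOn_finset_sum _ fun a _ => ?_
    refine continuousOn_finset_sum _ fun c _ => ?_
    refine continuous_norm.comp_continuousOn ?_
    refine ContinuousOn.sub ?_ continuousOn_const
    have h5 : ContinuousOn (fun u => ((-Complex.I) * (2 * Complex.I)⁻¹)
        * (ρ' u a c - ρ' u c a)) (Set.Icc (0:ℝ) T) :=
      continuousOn_const.mul ((hcont a c).sub (hcont c a))
    refine h5.congr fun u hu => ?_
    rw [Q_entry]
  have hbcont : ContinuousWithinAt b (Set.Icc (0:ℝ) T) s := hbcontOn s hs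
  have hb0 : b s = 0 := by simp [hb]
  have htends : Filter.Tendsto b (nhdsWithin s (Set.Icc (0:ℝ) T)) (nhds 0) := by
    have := hbcont
    rw [ContinuousWithinAt, hb0] at this
    exact this
  have h0 : Filter.Tendsto (fun t => g t - g s) (nhdsWithin s (Set.Icc (0:ℝ) T)) (nhds 0) := by
    refine squeeze_zero_norm' ?_ htends
    exact Filter.eventually_of_mem self_mem_nhdsWithin fun t ht => by
      simpa [Real.norm_eq_abs] using hbound t ht
  have := h0.add_const (g s)
  exact (by simpa using this : Filter.Tendsto g (nhdsWithin s (Set.Icc (0:ℝ) T)) (nhds (g s)))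

lemma key_est {d : ℕ} {T : ℝ} (hT : 0 < T) (ρ ρ' : ℝ → Matrix (Fin d) (Fin d) ℂ)
    (hdm : ∀ t ∈ Set.Icc (0:ℝ) T, (ρ t).IsHermitian)
    (hH' : ∀ t ∈ Set.Icc (0:ℝ) T, (ρ' t).IsHermitian)
    (hderiv : ∀ t ∈ Set.Icc (0:ℝ) T, ∀ i j, HasDerivAt (fun s => ρ s i j) (ρ' t i j) t)
    (hcont : ∀ i j, ContinuousOn (fun t => ρ' t i j) (Set.Icc (0:ℝ) T))
    {W : Matrix (Fin d) (Fin d) ℂ} (hW : W ∈ Matrix.unitaryGroup (Fin d) ℂ) :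
    (∑ i, ‖(star W * ((-Complex.I) • imM (ρ T)) * W) i i‖
      ≤ traceNorm (imM (ρ 0)) + ∫ t in (0:ℝ)..T, traceNorm (imM (ρ' t))) ∧
    (∑ i, ‖(star W * ((-Complex.I) • imM (ρ 0)) * W) i i‖
      ≤ traceNorm (imM (ρ T)) + ∫ t in (0:ℝ)..T, traceNorm (imM (ρ' t))) := by
  set c : ℂ := (-Complex.I) * (2 * Complex.I)⁻¹ with hc
  set x : ℝ → Fin d → ℂ := fun t i => (star W * ((-Complex.I) • imM (ρ t)) * W) i i with hx
  set y : ℝ → Fin d → ℂ := fun t i => (star W * ((-Complex.I) • imM (ρ' t)) * W) i i with hy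
  have huIcc : Set.uIcc (0:ℝ) T = Set.Icc 0 T := Set.uIcc_of_le hT.le
  have h0T : (0:ℝ) ∈ Set.Icc (0:ℝ) T := ⟨le_refl _, hT.le⟩
  have hTT : T ∈ Set.Icc (0:ℝ) T := ⟨hT.le, le_refl _⟩
  have hyent : ∀ t i, y t i = ∑ b, ∑ a, star (W a i) * (c * (ρ' t a b - ρ' t b a)) * W b i := by
    intro t i
    show (star W * ((-Complex.I) • imM (ρ' t)) * W) i i = _
    rw [diag_conj]
    exact Finset.sum_congr rfl fun b _ => Finset.sum_congr rfl fun a _ => by rw [Q_entry]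
  have hxent : ∀ t i, x t i = ∑ b, ∑ a, star (W a i) * (c * (ρ t a b - ρ t b a)) * W b i := by
    intro t i
    show (star W * ((-Complex.I) • imM (ρ t)) * W) i i = _
    rw [diag_conj]
    exact Finset.sum_congr rfl fun b _ => Finset.sum_congr rfl fun a _ => by rw [Q_entry]
  have hycont : ∀ i, ContinuousOn (fun t => y t i) (Set.Icc (0:ℝ) T) := by
    intro i
    have heq : (fun t => y t i)
        = fun t => ∑ b, ∑ a, star (W a i) * (c * (ρ' t a b - ρ' t b a)) * W b i :=
      funext fun t => hyent t i
    rw [heq]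
    refine continuousOn_finset_sum _ fun b _ => ?_
    refine continuousOn_finset_sum _ fun a _ => ?_
    exact (continuousOn_const.mul (continuousOn_const.mul
      ((hcont a b).sub (hcont b a)))).mul continuousOn_const
  have hxderiv : ∀ t ∈ Set.Icc (0:ℝ) T, ∀ i, HasDerivAt (fun s => x s i) (y t i) t := by
    intro t ht i
    have heq : (fun s => x s i)
        = fun s => ∑ b, ∑ a, star (W a i) * (c * (ρ s a b - ρ s b a)) * W b i :=
      funext fun s => hxent s i
    rw [heq, hyent t i]
    refine HasDerivAt.fun_sum fun b _ => ?_
    refine HasDerivAt.fun_sum fun a _ => ?_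
    exact (HasDerivAt.const_mul (star (W a i))
      (HasDerivAt.const_mul c ((hderiv t ht a b).sub (hderiv t ht b a)))).mul_const (W b i)
  have hftc : ∀ i, (∫ t in (0:ℝ)..T, y t i) = x T i - x 0 i := by
    intro i
    refine intervalIntegral.integral_eq_sub_of_hasDerivAt
      (fun t ht => hxderiv t (huIcc ▸ ht) i) ?_
    exact (huIcc.symm ▸ hycont i).intervalIntegrable
  have hyint : ∀ i, IntervalIntegrable (fun t => ‖y t i‖)
      MeasureTheory.volume 0 T := by
    intro i
    exact (huIcc.symm ▸ (continuous_norm.comp_continuousOn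
      (hycont i))).intervalIntegrable
  have habsint : ∀ i, ‖∫ t in (0:ℝ)..T, y t i‖
      ≤ ∫ t in (0:ℝ)..T, ‖y t i‖ := by
    intro i
    have := intervalIntegral.norm_integral_le_integral_norm
      (f := fun t => y t i) (μ := MeasureTheory.volume) hT.le
    simpa using this
  have hswap : ∑ i, ∫ t in (0:ℝ)..T, ‖y t i‖
      = ∫ t in (0:ℝ)..T, ∑ i, ‖y t i‖ :=
    (intervalIntegral.integral_finset_sum fun i _ => hyint i).symm
  have hptwise : ∀ t ∈ Set.Icc (0:ℝ) T, ∑ i, ‖y t i‖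
      ≤ traceNorm (imM (ρ' t)) := by
    intro t ht
    rw [tn_imM_eq_tnH, tnH_eq (hermQ (hH' t ht))]
    exact sum_abs_diag_le (hermQ (hH' t ht)) hW
  have hgint : IntervalIntegrable (fun t => traceNorm (imM (ρ' t)))
      MeasureTheory.volume 0 T :=
    (huIcc.symm ▸ g_contOn hT ρ' hH' hcont).intervalIntegrable
  have hsumcont : IntervalIntegrable (fun t => ∑ i, ‖y t i‖)
      MeasureTheory.volume 0 T := by
    refine (huIcc.symm ▸ ?_ : ContinuousOn _ _).intervalIntegrable
    exact continuousOn_finset_sum _ fun i _ =>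
      continuous_norm.comp_continuousOn (hycont i)
  have hmono : (∫ t in (0:ℝ)..T, ∑ i, ‖y t i‖)
      ≤ ∫ t in (0:ℝ)..T, traceNorm (imM (ρ' t)) :=
    intervalIntegral.integral_mono_on hT.le hsumcont hgint hptwise
  have hbig : ∑ i, ∫ t in (0:ℝ)..T, ‖y t i‖
      ≤ ∫ t in (0:ℝ)..T, traceNorm (imM (ρ' t)) := hswap.trans_le hmono
  have hx0 : ∑ i, ‖x 0 i‖ ≤ traceNorm (imM (ρ 0)) := by
    rw [tn_imM_eq_tnH, tnH_eq (hermQ (hdm 0 h0T))]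
    exact sum_abs_diag_le (hermQ (hdm 0 h0T)) hW
  have hxT : ∑ i, ‖x T i‖ ≤ traceNorm (imM (ρ T)) := by
    rw [tn_imM_eq_tnH, tnH_eq (hermQ (hdm T hTT))]
    exact sum_abs_diag_le (hermQ (hdm T hTT)) hW
  constructor
  · calc ∑ i, ‖x T i‖
        ≤ ∑ i, (‖x 0 i‖ + ‖x T i - x 0 i‖) := by
          refine Finset.sum_le_sum fun i _ => ?_
          calc ‖x T i‖ = ‖x 0 i + (x T i - x 0 i)‖ := by ring_nf
            _ ≤ _ := norm_add_le _ _
      _ = ∑ i, ‖x 0 i‖ + ∑ i, ‖x T i - x 0 i‖ :=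
          Finset.sum_add_distrib
      _ ≤ traceNorm (imM (ρ 0)) + ∑ i, ∫ t in (0:ℝ)..T, ‖y t i‖ := by
          refine add_le_add hx0 (Finset.sum_le_sum fun i _ => ?_)
          rw [← hftc i]
          exact habsint i
      _ ≤ traceNorm (imM (ρ 0)) + ∫ t in (0:ℝ)..T, traceNorm (imM (ρ' t)) :=
          add_le_add le_rfl hbig
  · calc ∑ i, ‖x 0 i‖
        ≤ ∑ i, (‖x T i‖ + ‖x T i - x 0 i‖) := by
          refine Finset.sum_le_sum fun i _ => ?_
          calc ‖x 0 i‖ = ‖x T i + -(x T i - x 0 i)‖ := by ring_nf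
            _ ≤ ‖x T i‖ + ‖-(x T i - x 0 i)‖ := norm_add_le _ _
            _ = _ := by rw [norm_neg]
      _ = ∑ i, ‖x T i‖ + ∑ i, ‖x T i - x 0 i‖ :=
          Finset.sum_add_distrib
      _ ≤ traceNorm (imM (ρ T)) + ∑ i, ∫ t in (0:ℝ)..T, ‖y t i‖ := by
          refine add_le_add hxT (Finset.sum_le_sum fun i _ => ?_)
          rw [← hftc i]
          exact habsint i
      _ ≤ traceNorm (imM (ρ T)) + ∫ t in (0:ℝ)..T, traceNorm (imM (ρ' t)) :=
          add_le_add le_rfl hbig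

theorem isl_trace_distance {d : ℕ} (T : ℝ) (hT : 0 < T)
    (ρ ρ' : ℝ → Matrix (Fin d) (Fin d) ℂ)
    (hdm : ∀ t ∈ Set.Icc 0 T, IsDensityMatrix (ρ t))
    (hderiv : ∀ t ∈ Set.Icc 0 T, ∀ i j, HasDerivAt (fun s => ρ s i j) (ρ' t i j) t)
    (hcont : ∀ i j, ContinuousOn (fun t => ρ' t i j) (Set.Icc 0 T)) :
    (|traceNorm (imM (ρ T)) - traceNorm (imM (ρ 0))| ≤
      ∫ t in (0:ℝ)..T, traceNorm (imM (ρ' t))) ∧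
    (T ≥ |traceNorm (imM (ρ T)) - traceNorm (imM (ρ 0))| /
      ((1 / T) * ∫ t in (0:ℝ)..T, traceNorm (imM (ρ' t)))) := by
  have h0T : (0:ℝ) ∈ Set.Icc (0:ℝ) T := ⟨le_refl _, hT.le⟩
  have hTT : T ∈ Set.Icc (0:ℝ) T := ⟨hT.le, le_refl _⟩
  have hdmH : ∀ t ∈ Set.Icc (0:ℝ) T, (ρ t).IsHermitian := fun t ht => (hdm t ht).1
  have hud : UniqueDiffOn ℝ (Set.Icc (0:ℝ) T) := uniqueDiffOn_Icc hT
  have hH' : ∀ t ∈ Set.Icc (0:ℝ) T, (ρ' t).IsHermitian := by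
    intro t ht
    refine Matrix.IsHermitian.ext fun i j => ?_
    have h1 : HasDerivWithinAt (fun s => ρ s i j) (ρ' t i j) (Set.Icc (0:ℝ) T) t :=
      (hderiv t ht i j).hasDerivWithinAt
    have h2 : HasDerivWithinAt (fun s => ρ s j i) (ρ' t j i) (Set.Icc (0:ℝ) T) t :=
      (hderiv t ht j i).hasDerivWithinAt
    have h3 : HasDerivWithinAt (fun s => ρ s i j) (star (ρ' t j i)) (Set.Icc (0:ℝ) T) t := by
      refine (h2.star).congr (fun u hu => ?_) ?_
      · exact ((hdm u hu).1.apply i j).symm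
      · exact ((hdm t ht).1.apply i j).symm
    have e1 := h1.derivWithin (hud t ht)
    have e2 := h3.derivWithin (hud t ht)
    exact e2.symm.trans e1
  have d1 : traceNorm (imM (ρ T)) ≤ traceNorm (imM (ρ 0))
      + ∫ t in (0:ℝ)..T, traceNorm (imM (ρ' t)) := by
    have hWT := hermQ (hdmH T hTT)
    have := (key_est hT ρ ρ' hdmH hH' hderiv hcont hWT.eigenvectorUnitary.2).1
    rwa [sum_abs_diag_eigen hWT, ← tn_imM_eq_tnH] at this
  have d2 : traceNorm (imM (ρ 0)) ≤ traceNorm (imM (ρ T))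
      + ∫ t in (0:ℝ)..T, traceNorm (imM (ρ' t)) := by
    have hW0 := hermQ (hdmH 0 h0T)
    have := (key_est hT ρ ρ' hdmH hH' hderiv hcont hW0.eigenvectorUnitary.2).2
    rwa [sum_abs_diag_eigen hW0, ← tn_imM_eq_tnH] at this
  have part1 : |traceNorm (imM (ρ T)) - traceNorm (imM (ρ 0))|
      ≤ ∫ t in (0:ℝ)..T, traceNorm (imM (ρ' t)) :=
    abs_sub_le_iff.2 ⟨by linarith, by linarith⟩
  refine ⟨part1, ?_⟩
  have hInonneg : 0 ≤ ∫ t in (0:ℝ)..T, traceNorm (imM (ρ' t)) :=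
    intervalIntegral.integral_nonneg hT.le fun u hu => by
      rw [tn_imM_eq_tnH]; exact tnH_nonneg (hermQ (hH' u hu))
  rcases eq_or_lt_of_le hInonneg with h0 | hpos
  · rw [ge_iff_le, ← h0, mul_zero, div_zero]
    exact hT.le
  · rw [ge_iff_le, div_le_iff₀ (by positivity)]
    calc |traceNorm (imM (ρ T)) - traceNorm (imM (ρ 0))|
        ≤ ∫ t in (0:ℝ)..T, traceNorm (imM (ρ' t)) := part1
      _ = T * (1 / T * ∫ t in (0:ℝ)..T, traceNorm (imM (ρ' t))) := by
          field_simp
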